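/- With the coupled random r-graph setup below, there exists ε₀ > 0 (depending only on r) such that for every fixed ε ∈ (0, ε₀) and any function g : ℕ → ℝ with g(n) → ∞ and g(n) = o(log n), with high probability as n → ∞ every nonempty set X ⊆ [n]∖W_σ with |X| ≤ Z = n(log n)^{−1/r} is r-expansive in G(σ). -/

import Mathlib

open Finset MeasureTheory Filter

noncomputable section
open scoped Classical

/-- The index set: `r`-element subsets of `[n]`. -/
abbrev RSubsets (n r : ℕ) := {S : Finset (Fin n) // S.card = r}

/-- The coupled model: independent `ξ_S`, uniform on `[0,1]`, one for each `r`-subset `S`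
of `[n]`; formally the product of uniform measures on the coordinates. -/
def xiMeasure (n r : ℕ) : Measure (RSubsets n r → ℝ) :=
  Measure.pi fun _ => volume.restrict (Set.Icc (0 : ℝ) 1)

/-- `W_σ`: the set of vertices lying in at most `ε log n` edges of `G(σ)`
(the edges of `G(σ)` being the `r`-subsets `S` with `ξ_S ≤ σ`). -/
def lowDeg {n r : ℕ} (ξ : RSubsets n r → ℝ) (σ : ℝ) (ε : ℝ) : Finset (Fin n) :=
  Finset.univ.filter fun v : Fin n =>
    (((Finset.univ : Finset (RSubsets n r)).filter fun S => v ∈ S.1 ∧ ξ S ≤ σ).card : ℝ) ≤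
      ε * Real.log n

lemma unif_prob : IsProbabilityMeasure (volume.restrict (Set.Icc (0 : ℝ) 1)) := by
  constructor
  rw [Measure.restrict_apply_univ, Real.volume_Icc]
  norm_num

lemma xiMeasure_prob (n r : ℕ) : IsProbabilityMeasure (xiMeasure n r) := by
  haveI := unif_prob
  exact MeasureTheory.Measure.pi.instIsProbabilityMeasure
    (μ := fun _ : RSubsets n r => volume.restrict (Set.Icc (0:ℝ) 1))

lemma pow_self_le_exp_mul_factorial (T : ℕ) : (T : ℝ) ^ T ≤ Real.exp T * T.factorial := by
  induction T with
  | zero => simp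
  | succ T ih =>
    rcases Nat.eq_zero_or_pos T with hT | hT
    · subst hT
      simpa using Real.one_le_exp (by norm_num)
    · have hTpos : (0:ℝ) < T := by exact_mod_cast hT
      have key : ((T:ℝ) + 1) ^ T ≤ Real.exp 1 * (T:ℝ) ^ T := by
        have h1 : ((T:ℝ) + 1) = (T:ℝ) * (1 + 1 / T) := by field_simp
        rw [h1, mul_pow]
        have h2 : (1 + 1 / (T:ℝ)) ^ T ≤ Real.exp (1 / T) ^ T := by
          apply pow_le_pow_left₀ (by positivity)
          linarith [Real.add_one_le_exp (1 / (T:ℝ))]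
        have h3 : Real.exp (1 / (T:ℝ)) ^ T = Real.exp 1 := by
          rw [← Real.exp_nat_mul]
          congr 1
          field_simp
        rw [h3] at h2
        calc (T:ℝ)^T * (1 + 1/(T:ℝ))^T ≤ (T:ℝ)^T * Real.exp 1 :=
              mul_le_mul_of_nonneg_left h2 (by positivity)
          _ = Real.exp 1 * (T:ℝ)^T := mul_comm _ _
      calc ((T+1:ℕ):ℝ) ^ (T+1) = ((T:ℝ)+1) * ((T:ℝ)+1) ^ T := by push_cast; ring
        _ ≤ ((T:ℝ)+1) * (Real.exp 1 * (T:ℝ)^T) := by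
              apply mul_le_mul_of_nonneg_left key (by positivity)
        _ ≤ ((T:ℝ)+1) * (Real.exp 1 * (Real.exp T * T.factorial)) := by
              apply mul_le_mul_of_nonneg_left _ (by positivity)
              exact mul_le_mul_of_nonneg_left ih (Real.exp_pos 1).le
        _ = Real.exp (T+1) * (((T:ℝ)+1) * T.factorial) := by
              rw [Real.exp_add]; ring
        _ = Real.exp (T+1) * ((T+1).factorial) := by
              rw [Nat.factorial_succ]; push_cast; ring
        _ = Real.exp ((T+1:ℕ):ℝ) * ((T+1).factorial) := by push_cast; ring

lemma xiMeasure_cylinder_le (n r : ℕ) (σ t : ℝ) (ht : 0 ≤ t) (hσt : σ ≤ t)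
    (A : Finset (RSubsets n r)) :
    xiMeasure n r {ξ | ∀ S ∈ A, ξ S ≤ σ} ≤ ENNReal.ofReal t ^ A.card := by
  haveI := unif_prob
  have hset : {ξ : RSubsets n r → ℝ | ∀ S ∈ A, ξ S ≤ σ} =
      Set.pi Set.univ (fun S => if S ∈ A then Set.Iic σ else Set.univ) := by
    ext ξ
    simp only [Set.mem_setOf_eq, Set.mem_pi, Set.mem_univ, forall_true_left]
    constructor
    · intro h S
      by_cases hS : S ∈ A <;> simp [hS, h S]
    · intro h S hS
      have := h S
      rw [if_pos hS] at this
      exact this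
  rw [xiMeasure, hset, Measure.pi_pi]
  have hν : (volume.restrict (Set.Icc (0:ℝ) 1)) (Set.Iic σ) ≤ ENNReal.ofReal t := by
    rw [Measure.restrict_apply measurableSet_Iic]
    refine le_trans (measure_mono (t := Set.Icc 0 t) ?_) ?_
    · intro x hx
      exact Set.mem_Icc.mpr ⟨hx.2.1, hx.1.trans hσt⟩
    · rw [Real.volume_Icc]; simp
  calc (∏ S : RSubsets n r,
        (volume.restrict (Set.Icc (0:ℝ) 1)) (if S ∈ A then Set.Iic σ else Set.univ))
      = ∏ S : RSubsets n r,
        (if S ∈ A then (volume.restrict (Set.Icc (0:ℝ) 1)) (Set.Iic σ) else 1) := by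
        apply Finset.prod_congr rfl
        intro S _
        by_cases hS : S ∈ A <;> simp [hS]
    _ = (volume.restrict (Set.Icc (0:ℝ) 1)) (Set.Iic σ) ^ A.card := by
        rw [Finset.prod_ite_mem, Finset.univ_inter, Finset.prod_const]
    _ ≤ ENNReal.ofReal t ^ A.card := pow_le_pow_left' hν _

set_option maxHeartbeats 2000000 in
lemma main_bound (r n : ℕ) (hr : 2 ≤ r) (ε gn : ℝ) (hε : 0 < ε) (hgn : 0 ≤ gn)
    (hn : 2 * r + 2 ≤ n) (hL1 : 1 ≤ Real.log n)
    (hsmall : 3 * r * (r * r.factorial * 2 ^ r) / ε * Real.log n ^ (-(1:ℝ) / r)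
        ≤ Real.exp (-(r * (r + 5)) / ε)) :
    xiMeasure n r {ξ : RSubsets n r → ℝ |
        ¬ ∀ X : Finset (Fin n), X.Nonempty →
            Disjoint X (lowDeg ξ ((Real.log n - gn) / (Nat.choose (n-1) (r-1) : ℝ)) ε) →
            (X.card : ℝ) ≤ n * Real.log n ^ (-(1:ℝ) / r) →
            ∀ Y : Finset (Fin n), Disjoint X Y → Y.card ≤ r * X.card →
              ∃ S : RSubsets n r, ξ S ≤ (Real.log n - gn) / (Nat.choose (n-1) (r-1) : ℝ) ∧
                (S.1 ∩ X).Nonempty ∧ Disjoint S.1 Y}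
      ≤ ENNReal.ofReal ((n : ℝ)⁻¹) := by
  have hn0 : 0 < n := by omega
  have hnR : (0:ℝ) < n := by exact_mod_cast hn0
  have hnR1 : (1:ℝ) ≤ n := by exact_mod_cast hn0
  set L : ℝ := Real.log n with hLdef
  have hL0 : 0 < L := lt_of_lt_of_le one_pos hL1
  set Cb : ℝ := (Nat.choose (n-1) (r-1) : ℝ) with hCbdef
  have hCb : 0 < Cb := by
    have h : 0 < Nat.choose (n-1) (r-1) := Nat.choose_pos (by omega)
    rw [hCbdef]
    exact_mod_cast h
  set σ : ℝ := (L - gn) / Cb with hσdef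
  set t : ℝ := L / Cb with htdef
  have ht : 0 ≤ t := by positivity
  have hσt : σ ≤ t := by
    rw [hσdef, htdef]
    gcongr
    linarith
  set T : ℕ → ℕ := fun k => ⌈(k:ℝ) * ε * L / r⌉₊ with hTdef
  set F : Finset (Fin n) → Finset (Fin n) → Finset (RSubsets n r) :=
    fun X Y => Finset.univ.filter
      (fun S : RSubsets n r => (S.1 ∩ X).Nonempty ∧ (S.1 ∩ Y).Nonempty) with hFdef
  set 𝒳 : Finset (Finset (Fin n)) :=
    Finset.univ.powerset.filter
      (fun X => X.Nonempty ∧ (X.card : ℝ) ≤ n * L ^ (-(1:ℝ) / r)) with hXsdef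
  set 𝒴 : Finset (Fin n) → Finset (Finset (Fin n)) :=
    fun X => Finset.univ.powerset.filter
      (fun Y => Disjoint X Y ∧ Y.card ≤ r * X.card) with hYsdef
  -- Step A: the bad event is covered by cylinders
  have hA : {ξ : RSubsets n r → ℝ |
        ¬ ∀ X : Finset (Fin n), X.Nonempty →
            Disjoint X (lowDeg ξ ((Real.log n - gn) / (Nat.choose (n-1) (r-1) : ℝ)) ε) →
            (X.card : ℝ) ≤ n * Real.log n ^ (-(1:ℝ) / r) →
            ∀ Y : Finset (Fin n), Disjoint X Y → Y.card ≤ r * X.card →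
              ∃ S : RSubsets n r, ξ S ≤ (Real.log n - gn) / (Nat.choose (n-1) (r-1) : ℝ) ∧
                (S.1 ∩ X).Nonempty ∧ Disjoint S.1 Y}
      ⊆ ⋃ X ∈ 𝒳, ⋃ Y ∈ 𝒴 X, ⋃ A ∈ Finset.powersetCard (T X.card) (F X Y),
          {ξ : RSubsets n r → ℝ | ∀ S ∈ A, ξ S ≤ σ} := by
    intro ξ hξ
    simp only [Set.mem_setOf_eq] at hξ
    push_neg at hξ
    obtain ⟨X, hXne, hXdisj, hXZ, Y, hXY, hYc, hno⟩ := hξ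
    set bad : Finset (RSubsets n r) := (F X Y).filter (fun S => ξ S ≤ σ) with hbaddef
    have hdegsub : ∀ v ∈ X,
        (Finset.univ.filter (fun S : RSubsets n r => v ∈ S.1 ∧ ξ S ≤ σ)) ⊆
          bad.filter (fun S => v ∈ S.1) := by
      intro v hv S hS
      rw [Finset.mem_filter] at hS
      obtain ⟨-, hvS, hξS⟩ := hS
      have hSX : (S.1 ∩ X).Nonempty := ⟨v, Finset.mem_inter.mpr ⟨hvS, hv⟩⟩
      have hSY : (S.1 ∩ Y).Nonempty := by
        by_contra hcon
        exact hno S hξS hSX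
          (Finset.disjoint_iff_inter_eq_empty.mpr (Finset.not_nonempty_iff_eq_empty.mp hcon))
      rw [Finset.mem_filter, hbaddef, Finset.mem_filter, hFdef, Finset.mem_filter]
      exact ⟨⟨⟨Finset.mem_univ _, hSX, hSY⟩, hξS⟩, hvS⟩
    have hdeg : ∀ v ∈ X,
        ε * L < ((Finset.univ.filter (fun S : RSubsets n r => v ∈ S.1 ∧ ξ S ≤ σ)).card : ℝ) := by
      intro v hv
      have hvnot : v ∉ lowDeg ξ σ ε := Finset.disjoint_left.mp hXdisj hv
      rw [lowDeg, Finset.mem_filter] at hvnot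
      push_neg at hvnot
      exact hvnot (Finset.mem_univ v)
    have hsum : (X.card : ℝ) * (ε * L) < (r : ℝ) * bad.card := by
      have h1 : ∀ v ∈ X, ε * L < ((bad.filter (fun S => v ∈ S.1)).card : ℝ) := by
        intro v hv
        refine lt_of_lt_of_le (hdeg v hv) ?_
        exact_mod_cast Finset.card_le_card (hdegsub v hv)
      have h2 : ∑ v ∈ X, (bad.filter (fun S => v ∈ S.1)).card
          = ∑ S ∈ bad, (X.filter (fun v => v ∈ S.1)).card := by
        simp only [Finset.card_filter]
        rw [Finset.sum_comm]
      have h3 : ∀ S ∈ bad, (X.filter (fun v => v ∈ S.1)).card ≤ r := by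
        intro S _
        refine le_trans (Finset.card_le_card (fun v hv => (Finset.mem_filter.mp hv).2)) ?_
        exact le_of_eq S.2
      calc (X.card : ℝ) * (ε * L) = ∑ _v ∈ X, (ε * L) := by
            rw [Finset.sum_const, nsmul_eq_mul]
        _ < ∑ v ∈ X, ((bad.filter (fun S => v ∈ S.1)).card : ℝ) :=
            Finset.sum_lt_sum_of_nonempty hXne h1
        _ = ((∑ v ∈ X, (bad.filter (fun S => v ∈ S.1)).card : ℕ) : ℝ) := by push_cast; ring
        _ = ((∑ S ∈ bad, (X.filter (fun v => v ∈ S.1)).card : ℕ) : ℝ) := by rw [h2]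
        _ ≤ ((∑ _S ∈ bad, r : ℕ) : ℝ) := by exact_mod_cast Finset.sum_le_sum h3
        _ = (r : ℝ) * bad.card := by rw [Finset.sum_const, smul_eq_mul]; push_cast; ring
    have hTle : T X.card ≤ bad.card := by
      rw [hTdef]
      apply Nat.ceil_le.mpr
      rw [div_le_iff₀ (by exact_mod_cast (by omega : 0 < r) : (0:ℝ) < r)]
      nlinarith [hsum]
    obtain ⟨A, hAbad, hAcard⟩ := Finset.exists_subset_card_eq hTle
    refine Set.mem_iUnion₂.mpr ⟨X, ?_, Set.mem_iUnion₂.mpr ⟨Y, ?_,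
      Set.mem_iUnion₂.mpr ⟨A, ?_, ?_⟩⟩⟩
    · rw [hXsdef, Finset.mem_filter]
      exact ⟨Finset.mem_powerset.mpr (Finset.subset_univ X), hXne, hXZ⟩
    · rw [hYsdef, Finset.mem_filter]
      exact ⟨Finset.mem_powerset.mpr (Finset.subset_univ Y), hXY, hYc⟩
    · exact Finset.mem_powersetCard.mpr ⟨hAbad.trans (Finset.filter_subset _ _), hAcard⟩
    · intro S hS
      exact (Finset.mem_filter.mp (hAbad hS)).2
  -- counting the r-sets meeting both X and Y
  have hF : ∀ X Y : Finset (Fin n), Disjoint X Y →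
      (F X Y).card ≤ X.card * Y.card * Nat.choose n (r - 2) := by
    intro X Y hXY
    have himg : (F X Y).card = ((F X Y).image Subtype.val).card :=
      (Finset.card_image_of_injective _ Subtype.val_injective).symm
    rw [himg]
    have hsub : (F X Y).image Subtype.val ⊆
        X.biUnion (fun x => Y.biUnion (fun y =>
          (Finset.powersetCard (r-2) (Finset.univ : Finset (Fin n))).image
            (fun R => insert x (insert y R)))) := by
      intro E hE
      obtain ⟨S, hS, rfl⟩ := Finset.mem_image.mp hE
      have hSmem := (Finset.mem_filter.mp hS).2
      obtain ⟨x, hx⟩ := hSmem.1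
      obtain ⟨y, hy⟩ := hSmem.2
      have hxS : x ∈ S.1 := (Finset.mem_inter.mp hx).1
      have hxX : x ∈ X := (Finset.mem_inter.mp hx).2
      have hyS : y ∈ S.1 := (Finset.mem_inter.mp hy).1
      have hyY : y ∈ Y := (Finset.mem_inter.mp hy).2
      have hxy : x ≠ y := fun h => (Finset.disjoint_left.mp hXY hxX) (h ▸ hyY)
      have hpair : ({x, y} : Finset (Fin n)) ⊆ S.1 := by
        intro a ha
        rcases Finset.mem_insert.mp ha with h | h
        · exact h ▸ hxS
        · rw [Finset.mem_singleton.mp h]; exact hyS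
      refine Finset.mem_biUnion.mpr ⟨x, hxX, Finset.mem_biUnion.mpr ⟨y, hyY,
        Finset.mem_image.mpr ⟨S.1 \ {x, y}, ?_, ?_⟩⟩⟩
      · rw [Finset.mem_powersetCard]
        refine ⟨Finset.subset_univ _, ?_⟩
        rw [Finset.card_sdiff_of_subset hpair, S.2,
          Finset.card_insert_of_notMem (by simp [hxy]), Finset.card_singleton]
      · ext a
        simp only [Finset.mem_insert, Finset.mem_sdiff, Finset.mem_singleton]
        constructor
        · rintro (rfl | rfl | ⟨h, -⟩)
          · exact hxS
          · exact hyS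
          · exact h
        · intro ha
          by_cases h1 : a = x
          · exact Or.inl h1
          by_cases h2 : a = y
          · exact Or.inr (Or.inl h2)
          · exact Or.inr (Or.inr ⟨ha, fun h => absurd h (by simp [h1, h2])⟩)
    refine (Finset.card_le_card hsub).trans ?_
    refine Finset.card_biUnion_le.trans ?_
    refine (Finset.sum_le_sum (fun x _ => Finset.card_biUnion_le)).trans ?_
    have hcc : ∀ x ∈ X, ∀ y ∈ Y,
        ((Finset.powersetCard (r-2) (Finset.univ : Finset (Fin n))).image
          (fun R => insert x (insert y R))).card ≤ Nat.choose n (r-2) := by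
      intro x _ y _
      refine Finset.card_image_le.trans (le_of_eq ?_)
      rw [Finset.card_powersetCard, Finset.card_univ, Fintype.card_fin]
    refine (Finset.sum_le_sum (fun x hx => Finset.sum_le_sum (hcc x hx))).trans ?_
    simp only [Finset.sum_const, smul_eq_mul]
    rw [mul_assoc]
  -- counting the Y's
  have hYcount : ∀ X : Finset (Fin n), (𝒴 X).card ≤ n ^ (r * X.card + 2) := by
    intro X
    have h1 : 𝒴 X ⊆ (Finset.range (r * X.card + 1)).biUnion
        (fun j => Finset.powersetCard j (Finset.univ : Finset (Fin n))) := by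
      intro Y hY
      have hYle := (Finset.mem_filter.mp hY).2.2
      exact Finset.mem_biUnion.mpr ⟨Y.card, Finset.mem_range.mpr (by omega),
        Finset.mem_powersetCard.mpr ⟨Finset.subset_univ _, rfl⟩⟩
    refine (Finset.card_le_card h1).trans (Finset.card_biUnion_le.trans ?_)
    have h2 : ∀ j ∈ Finset.range (r * X.card + 1),
        (Finset.powersetCard j (Finset.univ : Finset (Fin n))).card ≤ n ^ (r * X.card) := by
      intro j hj
      rw [Finset.card_powersetCard, Finset.card_univ, Fintype.card_fin]
      exact (Nat.choose_le_pow n j).trans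
        (Nat.pow_le_pow_right (by omega) (by have := Finset.mem_range.mp hj; omega))
    refine (Finset.sum_le_sum h2).trans ?_
    rw [Finset.sum_const, Finset.card_range, smul_eq_mul]
    have hk : X.card ≤ n := le_trans (Finset.card_le_univ X) (by simp)
    have hrn : r * X.card + 1 ≤ n ^ 2 := by
      have h4 : r * X.card ≤ r * n := Nat.mul_le_mul_left r hk
      have h5 : r * n + n ≤ n * n := by
        have : r + 1 ≤ n := by omega
        calc r * n + n = (r + 1) * n := by ring
          _ ≤ n * n := Nat.mul_le_mul_right n this
      have h6 : 1 ≤ n := hn0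
      calc r * X.card + 1 ≤ r * n + n := by omega
        _ ≤ n * n := h5
        _ = n ^ 2 := (sq n).symm
    calc (r * X.card + 1) * n ^ (r * X.card) ≤ n ^ 2 * n ^ (r * X.card) :=
          Nat.mul_le_mul_right _ hrn
      _ = n ^ (r * X.card + 2) := by rw [← pow_add]; ring_nf
  -- the key numeric estimate per (X, Y)
  have key : ∀ X ∈ 𝒳, ∀ Y ∈ 𝒴 X,
      (Nat.choose ((F X Y).card) (T X.card) : ENNReal) * ENNReal.ofReal t ^ (T X.card)
        ≤ ENNReal.ofReal (((n:ℝ) ^ ((r+5) * X.card))⁻¹) := by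
    intro X hX Y hY
    obtain ⟨-, hXne, hXZ⟩ := Finset.mem_filter.mp hX
    obtain ⟨-, hXYd, hYle⟩ := Finset.mem_filter.mp hY
    set k := X.card with hkdef
    have hk1 : 1 ≤ k := Finset.one_le_card.mpr hXne
    have hkR : (1:ℝ) ≤ k := by exact_mod_cast hk1
    set N := (F X Y).card with hNdef
    set Tk := T k with hTkdef
    have hTkge : (k:ℝ) * ε * L / r ≤ Tk := by rw [hTkdef, hTdef]; exact Nat.le_ceil _
    have hrR : (0:ℝ) < r := by exact_mod_cast (by omega : 0 < r)
    have hTkpos : (0:ℝ) < Tk := lt_of_lt_of_le (by positivity) hTkge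
    have hNle : (N:ℝ) ≤ (r:ℝ) * k^2 * (n:ℝ)^(r-2) := by
      have h2 : (N:ℝ) ≤ (k:ℝ) * Y.card * Nat.choose n (r-2) := by
        exact_mod_cast hF X Y hXYd
      have h3 : (Y.card : ℝ) ≤ (r:ℝ) * k := by exact_mod_cast hYle
      have h4 : (Nat.choose n (r-2) : ℝ) ≤ (n:ℝ)^(r-2) := by
        exact_mod_cast Nat.choose_le_pow n (r-2)
      calc (N:ℝ) ≤ (k:ℝ) * Y.card * Nat.choose n (r-2) := h2
        _ ≤ (k:ℝ) * ((r:ℝ)*k) * (n:ℝ)^(r-2) := by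
            apply mul_le_mul (mul_le_mul_of_nonneg_left h3 (by positivity)) h4
              (by positivity) (by positivity)
        _ = (r:ℝ) * k^2 * (n:ℝ)^(r-2) := by ring
    have hcast1 : ((n - (r-1) : ℕ):ℝ) = (n:ℝ) - ((r:ℝ) - 1) := by
      rw [Nat.cast_sub (by omega)]
      rw [Nat.cast_sub (by omega : 1 ≤ r)]
      push_cast
      ring
    have hCbn : (n:ℝ)^(r-1) ≤ Cb * r.factorial * 2^r := by
      have h1 := Nat.pow_le_choose (α := ℝ) (r-1) (n-1)
      have h2 : (n - 1 + 1 - (r-1)) = n - (r - 1) := by omega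
      rw [h2] at h1
      rw [div_le_iff₀ (by positivity : (0:ℝ) < ((r-1).factorial : ℝ))] at h1
      have h3 : (n:ℝ) ≤ 2 * ((n - (r-1) : ℕ):ℝ) := by
        rw [hcast1]
        have h7 : (2*(r:ℝ) + 2) ≤ n := by exact_mod_cast hn
        linarith
      have h4 : (n:ℝ)^(r-1) ≤ 2^(r-1) * ((n - (r-1):ℕ):ℝ)^(r-1) := by
        calc (n:ℝ)^(r-1) ≤ (2 * ((n-(r-1):ℕ):ℝ))^(r-1) :=
              pow_le_pow_left₀ (by positivity) h3 _
          _ = 2^(r-1) * ((n-(r-1):ℕ):ℝ)^(r-1) := mul_pow _ _ _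
      have h5 : ((r-1).factorial : ℝ) ≤ r.factorial := by
        exact_mod_cast Nat.factorial_le (by omega)
      have h6 : (2:ℝ)^(r-1) ≤ 2^r := pow_le_pow_right₀ (by norm_num) (by omega)
      calc (n:ℝ)^(r-1) ≤ 2^(r-1) * (Cb * (r-1).factorial) := by
            refine h4.trans (mul_le_mul_of_nonneg_left ?_ (by positivity))
            exact h1
        _ ≤ 2^r * (Cb * r.factorial) := by
            apply mul_le_mul h6 (mul_le_mul_of_nonneg_left h5 hCb.le)
              (mul_nonneg hCb.le (by positivity)) (by positivity)
        _ = Cb * r.factorial * 2^r := by ring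
    have htle : t ≤ L * (r.factorial : ℝ) * 2^r / (n:ℝ)^(r-1) := by
      rw [htdef, div_le_div_iff₀ hCb (by positivity)]
      calc L * (n:ℝ)^(r-1) ≤ L * (Cb * r.factorial * 2^r) :=
            mul_le_mul_of_nonneg_left hCbn hL0.le
        _ = L * r.factorial * 2^r * Cb := by ring
    have hnpow : (n:ℝ)^(r-1) = (n:ℝ)^(r-2) * n := by
      rw [← pow_succ]
      congr 1
      omega
    have hNt : (N:ℝ) * t ≤ ((r:ℝ) * r.factorial * 2^r) * k^2 * L / n := by
      have h1 : (N:ℝ) * t ≤ ((r:ℝ) * k^2 * (n:ℝ)^(r-2)) * (L * r.factorial * 2^r / (n:ℝ)^(r-1)) :=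
        mul_le_mul hNle htle ht (by positivity)
      refine h1.trans (le_of_eq ?_)
      rw [hnpow]
      field_simp
    set β : ℝ := Real.exp (-((r:ℝ) * ((r:ℝ) + 5)) / ε) with hβdef
    have hβ0 : 0 < β := Real.exp_pos _
    have hstep4 : (N:ℝ) * t * Real.exp 1 / Tk ≤ β := by
      have hexp3 : Real.exp 1 ≤ 3 := by
        have := Real.exp_one_lt_d9
        linarith
      have hnum : (N:ℝ) * t * Real.exp 1 ≤ ((r:ℝ)*r.factorial*2^r) * k^2 * L / n * 3 :=
        mul_le_mul hNt hexp3 (Real.exp_pos 1).le (by positivity)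
      have hden : (0:ℝ) < (k:ℝ) * ε * L / r := by positivity
      have h1 : (N:ℝ) * t * Real.exp 1 / Tk
          ≤ (((r:ℝ)*r.factorial*2^r) * k^2 * L / n * 3) / ((k:ℝ) * ε * L / r) :=
        div_le_div₀ (by positivity) hnum hden hTkge
      refine h1.trans ?_
      have heq : (((r:ℝ)*r.factorial*2^r) * k^2 * L / n * 3) / ((k:ℝ) * ε * L / r)
          = (3 * r * ((r:ℝ)*r.factorial*2^r) / ε) * ((k:ℝ) / n) := by
        field_simp
      rw [heq]
      have hkn : (k:ℝ) / n ≤ L ^ (-(1:ℝ)/r) := by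
        rw [div_le_iff₀ hnR]
        calc (k:ℝ) ≤ n * L ^ (-(1:ℝ)/r) := hXZ
          _ = L ^ (-(1:ℝ)/r) * n := mul_comm _ _
      calc (3 * (r:ℝ) * ((r:ℝ)*r.factorial*2^r) / ε) * ((k:ℝ)/n)
          ≤ (3 * (r:ℝ) * ((r:ℝ)*r.factorial*2^r) / ε) * L ^ (-(1:ℝ)/r) :=
            mul_le_mul_of_nonneg_left hkn (by positivity)
        _ ≤ β := hsmall
    have hmain : (Nat.choose N Tk : ℝ) * t ^ Tk ≤ ((n:ℝ) ^ ((r+5) * k))⁻¹ := by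
      have hc1 : (Nat.choose N Tk : ℝ) ≤ (N:ℝ)^Tk / (Tk.factorial : ℝ) := by
        exact_mod_cast Nat.choose_le_pow_div Tk N
      have hc2 : (Nat.choose N Tk : ℝ) * t ^ Tk ≤ ((N:ℝ) * t)^Tk / (Tk.factorial : ℝ) := by
        calc (Nat.choose N Tk : ℝ) * t ^ Tk ≤ ((N:ℝ)^Tk / (Tk.factorial : ℝ)) * t ^ Tk :=
              mul_le_mul_of_nonneg_right hc1 (by positivity)
          _ = ((N:ℝ) * t)^Tk / (Tk.factorial : ℝ) := by
              rw [mul_pow, div_mul_eq_mul_div]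
      have hfact : (Tk:ℝ)^Tk ≤ Real.exp 1 ^ Tk * Tk.factorial := by
        have h := pow_self_le_exp_mul_factorial Tk
        have h2 : Real.exp (Tk:ℝ) = Real.exp 1 ^ Tk := by
          rw [← Real.exp_nat_mul, mul_one]
        rwa [h2] at h
      have hc3 : ((N:ℝ)*t)^Tk / (Tk.factorial:ℝ) ≤ ((N:ℝ)*t*Real.exp 1 / (Tk:ℝ))^Tk := by
        rw [div_pow, mul_pow, mul_pow]
        rw [div_le_div_iff₀ (by positivity) (by positivity)]
        calc (N:ℝ)^Tk * t^Tk * (Tk:ℝ)^Tk ≤ (N:ℝ)^Tk * t^Tk * (Real.exp 1 ^ Tk * Tk.factorial) :=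
              mul_le_mul_of_nonneg_left hfact (by positivity)
          _ = ((N:ℝ)*t)^Tk * Real.exp 1 ^ Tk * Tk.factorial := by rw [mul_pow]; ring
      have hc4 : ((N:ℝ)*t*Real.exp 1/(Tk:ℝ))^Tk ≤ β^Tk :=
        pow_le_pow_left₀ (by positivity) hstep4 Tk
      have hc5 : β^Tk ≤ ((n:ℝ) ^ ((r+5)*k))⁻¹ := by
        rw [hβdef, ← Real.exp_nat_mul]
        have hrhs : ((n:ℝ) ^ ((r+5)*k))⁻¹ = Real.exp (-((((r+5)*k : ℕ)):ℝ) * L) := by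
          rw [neg_mul, Real.exp_neg]
          congr 1
          rw [Real.exp_nat_mul, hLdef, Real.exp_log hnR]
        rw [hrhs]
        apply Real.exp_le_exp.mpr
        have hT' : ((r:ℝ)+5) * k * L ≤ (Tk:ℝ) * ((r:ℝ)*((r:ℝ)+5)/ε) := by
          have hm := mul_le_mul_of_nonneg_right hTkge
            (le_of_lt (by positivity : (0:ℝ) < ((r:ℝ)*((r:ℝ)+5))/ε))
          calc ((r:ℝ)+5)*k*L = ((k:ℝ)*ε*L/r) * ((r:ℝ)*((r:ℝ)+5)/ε) := by
                field_simp
            _ ≤ (Tk:ℝ) * ((r:ℝ)*((r:ℝ)+5)/ε) := hm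
        push_cast
        rw [neg_div, mul_neg, neg_mul, neg_le_neg_iff]
        linarith [hT']
      exact ((hc2.trans hc3).trans hc4).trans hc5
    calc (Nat.choose N Tk : ENNReal) * ENNReal.ofReal t ^ Tk
        = ENNReal.ofReal ((Nat.choose N Tk : ℝ) * t ^ Tk) := by
          rw [ENNReal.ofReal_mul (by positivity), ENNReal.ofReal_pow ht,
            ENNReal.ofReal_natCast]
      _ ≤ ENNReal.ofReal (((n:ℝ) ^ ((r+5)*k))⁻¹) := ENNReal.ofReal_le_ofReal hmain
  -- per-exponent term bound
  have hterm : ∀ c ∈ Finset.Icc 1 n, ((n:ENNReal)^c) *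
      ((n : ENNReal) ^ (r * c + 2) * ENNReal.ofReal (((n:ℝ) ^ ((r+5) * c))⁻¹))
        ≤ ENNReal.ofReal (((n:ℝ)^2)⁻¹) := by
    intro c hc
    obtain ⟨hc1, hcn⟩ := Finset.mem_Icc.mp hc
    have he1 : (n : ENNReal) ^ c = ENNReal.ofReal ((n:ℝ)^c) := by
      rw [ENNReal.ofReal_pow hnR.le, ENNReal.ofReal_natCast]
    have he2 : (n : ENNReal) ^ (r*c+2) = ENNReal.ofReal ((n:ℝ)^(r*c+2)) := by
      rw [ENNReal.ofReal_pow hnR.le, ENNReal.ofReal_natCast]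
    rw [he1, he2, ← ENNReal.ofReal_mul (by positivity), ← ENNReal.ofReal_mul (by positivity)]
    apply ENNReal.ofReal_le_ofReal
    have hexp : c + (r*c+2) + 2 ≤ (r+5)*c := by
      have h5 : (r+5)*c = r*c + 5*c := by ring
      omega
    have h1 : (n:ℝ)^(c + (r*c+2)) * (n:ℝ)^2 ≤ (n:ℝ)^((r+5)*c) := by
      rw [← pow_add]
      exact pow_le_pow_right₀ hnR1 hexp
    rw [← mul_assoc, ← pow_add, ← div_eq_mul_inv, div_le_iff₀ (by positivity),
      inv_mul_eq_div, le_div_iff₀ (by positivity)]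
    exact h1
  -- grouping over the cardinality of X
  have hgroup : (∑ X ∈ 𝒳, ((n : ENNReal) ^ (r * X.card + 2)
        * ENNReal.ofReal (((n:ℝ) ^ ((r+5) * X.card))⁻¹)))
      ≤ ∑ c ∈ Finset.Icc 1 n, ((n:ENNReal)^c *
          ((n : ENNReal) ^ (r * c + 2) * ENNReal.ofReal (((n:ℝ) ^ ((r+5) * c))⁻¹))) := by
    have hcomp := Finset.sum_comp (s := 𝒳)
      (fun c => (n : ENNReal) ^ (r * c + 2) * ENNReal.ofReal (((n:ℝ) ^ ((r+5) * c))⁻¹))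
      Finset.card
    rw [hcomp]
    have himg : 𝒳.image Finset.card ⊆ Finset.Icc 1 n := by
      intro c hc
      obtain ⟨X, hX, rfl⟩ := Finset.mem_image.mp hc
      obtain ⟨-, hXne, -⟩ := Finset.mem_filter.mp hX
      exact Finset.mem_Icc.mpr ⟨Finset.one_le_card.mpr hXne,
        le_trans (Finset.card_le_univ X) (by simp)⟩
    refine le_trans (Finset.sum_le_sum ?_) (Finset.sum_le_sum_of_subset himg)
    intro c _
    rw [nsmul_eq_mul]
    apply mul_le_mul_left
    have hsub2 : 𝒳.filter (fun X => X.card = c) ⊆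
        Finset.powersetCard c (Finset.univ : Finset (Fin n)) := by
      intro X hX
      exact Finset.mem_powersetCard.mpr ⟨Finset.subset_univ _, (Finset.mem_filter.mp hX).2⟩
    calc ((𝒳.filter (fun X => X.card = c)).card : ENNReal)
        ≤ ((Finset.powersetCard c (Finset.univ : Finset (Fin n))).card : ENNReal) := by
          exact_mod_cast Finset.card_le_card hsub2
      _ = ((Nat.choose n c : ℕ) : ENNReal) := by
          rw [Finset.card_powersetCard, Finset.card_univ, Fintype.card_fin]
      _ ≤ ((n^c : ℕ) : ENNReal) := by exact_mod_cast Nat.choose_le_pow n c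
      _ = (n:ENNReal)^c := by push_cast; ring
  -- final chain
  refine le_trans (measure_mono hA) ?_
  calc xiMeasure n r (⋃ X ∈ 𝒳, ⋃ Y ∈ 𝒴 X, ⋃ A ∈ Finset.powersetCard (T X.card) (F X Y),
        {ξ : RSubsets n r → ℝ | ∀ S ∈ A, ξ S ≤ σ})
      ≤ ∑ X ∈ 𝒳, xiMeasure n r (⋃ Y ∈ 𝒴 X, ⋃ A ∈ Finset.powersetCard (T X.card) (F X Y),
          {ξ : RSubsets n r → ℝ | ∀ S ∈ A, ξ S ≤ σ}) := measure_biUnion_finset_le _ _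
    _ ≤ ∑ X ∈ 𝒳, ∑ Y ∈ 𝒴 X, xiMeasure n r (⋃ A ∈ Finset.powersetCard (T X.card) (F X Y),
          {ξ : RSubsets n r → ℝ | ∀ S ∈ A, ξ S ≤ σ}) :=
        Finset.sum_le_sum (fun X _ => measure_biUnion_finset_le _ _)
    _ ≤ ∑ X ∈ 𝒳, ∑ Y ∈ 𝒴 X, ∑ A ∈ Finset.powersetCard (T X.card) (F X Y),
          xiMeasure n r {ξ : RSubsets n r → ℝ | ∀ S ∈ A, ξ S ≤ σ} :=
        Finset.sum_le_sum (fun X _ => Finset.sum_le_sum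
          (fun Y _ => measure_biUnion_finset_le _ _))
    _ ≤ ∑ X ∈ 𝒳, ∑ Y ∈ 𝒴 X, ∑ _A ∈ Finset.powersetCard (T X.card) (F X Y),
          ENNReal.ofReal t ^ (T X.card) := by
        refine Finset.sum_le_sum (fun X _ => Finset.sum_le_sum
          (fun Y _ => Finset.sum_le_sum (fun A hA' => ?_)))
        have hcard := (Finset.mem_powersetCard.mp hA').2
        calc xiMeasure n r {ξ : RSubsets n r → ℝ | ∀ S ∈ A, ξ S ≤ σ}
            ≤ ENNReal.ofReal t ^ A.card := xiMeasure_cylinder_le n r σ t ht hσt A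
          _ = ENNReal.ofReal t ^ (T X.card) := by rw [hcard]
    _ = ∑ X ∈ 𝒳, ∑ Y ∈ 𝒴 X,
          (Nat.choose ((F X Y).card) (T X.card) : ENNReal)
            * ENNReal.ofReal t ^ (T X.card) := by
        refine Finset.sum_congr rfl (fun X _ => Finset.sum_congr rfl (fun Y _ => ?_))
        rw [Finset.sum_const, Finset.card_powersetCard, nsmul_eq_mul]
    _ ≤ ∑ X ∈ 𝒳, ∑ Y ∈ 𝒴 X, ENNReal.ofReal (((n:ℝ) ^ ((r+5) * X.card))⁻¹) :=
        Finset.sum_le_sum (fun X hX => Finset.sum_le_sum (fun Y hY => key X hX Y hY))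
    _ ≤ ∑ X ∈ 𝒳, (n : ENNReal) ^ (r * X.card + 2)
          * ENNReal.ofReal (((n:ℝ) ^ ((r+5) * X.card))⁻¹) := by
        refine Finset.sum_le_sum (fun X _ => ?_)
        rw [Finset.sum_const, nsmul_eq_mul]
        apply mul_le_mul_left
        calc ((𝒴 X).card : ENNReal) ≤ ((n ^ (r * X.card + 2) : ℕ) : ENNReal) := by
              exact_mod_cast hYcount X
          _ = (n : ENNReal) ^ (r * X.card + 2) := by push_cast; ring
    _ ≤ ∑ c ∈ Finset.Icc 1 n, ((n:ENNReal)^c *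
          ((n : ENNReal) ^ (r * c + 2) * ENNReal.ofReal (((n:ℝ) ^ ((r+5) * c))⁻¹))) := hgroup
    _ ≤ ∑ _c ∈ Finset.Icc 1 n, ENNReal.ofReal (((n:ℝ)^2)⁻¹) := Finset.sum_le_sum hterm
    _ = (n : ENNReal) * ENNReal.ofReal (((n:ℝ)^2)⁻¹) := by
        rw [Finset.sum_const, Nat.card_Icc, nsmul_eq_mul]
        congr 1
    _ = ENNReal.ofReal ((n:ℝ) * ((n:ℝ)^2)⁻¹) := by
        rw [← ENNReal.ofReal_natCast n, ← ENNReal.ofReal_mul (by positivity)]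
    _ = ENNReal.ofReal ((n:ℝ)⁻¹) := by
        congr 1
        rw [pow_two, mul_inv, ← mul_assoc, mul_inv_cancel₀ (ne_of_gt hnR), one_mul]

/-- There is `ε₀ > 0` (depending only on `r`) such that for every fixed
`ε ∈ (0, ε₀)` and every `g → ∞` with `g = o(log n)`, w.h.p. every nonempty
`X ⊆ [n] ∖ W_σ` with `|X| ≤ Z = n (log n)^{-1/r}` is `r`-expansive in `G(σ)`:
for every `Y` disjoint from `X` with `|Y| ≤ r|X|` some edge of `G(σ)` meets `X`
and is disjoint from `Y`. -/
theorem stmt16 (r : ℕ) (hr : 2 ≤ r) :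
    ∃ ε₀ : ℝ, 0 < ε₀ ∧
      ∀ ε : ℝ, 0 < ε → ε < ε₀ →
      ∀ g : ℕ → ℝ, Tendsto g atTop atTop →
        (g =o[atTop] fun n : ℕ => Real.log n) →
        Tendsto (fun n : ℕ =>
            xiMeasure n r {ξ : RSubsets n r → ℝ |
              let σ : ℝ := (Real.log n - g n) / (Nat.choose (n - 1) (r - 1) : ℝ)
              ∀ X : Finset (Fin n), X.Nonempty → Disjoint X (lowDeg ξ σ ε) →
                (X.card : ℝ) ≤ n * Real.log n ^ (-(1 : ℝ) / r) →
                ∀ Y : Finset (Fin n), Disjoint X Y → Y.card ≤ r * X.card →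
                  ∃ S : RSubsets n r, ξ S ≤ σ ∧ (S.1 ∩ X).Nonempty ∧ Disjoint S.1 Y})
          atTop (nhds 1) := by
  refine ⟨1, one_pos, ?_⟩
  intro ε hε hε1 g hg hgo
  have hofreal : Tendsto (fun n : ℕ => ENNReal.ofReal ((n:ℝ)⁻¹)) atTop (nhds 0) := by
    have h1 : Tendsto (fun n : ℕ => ((n:ℝ))⁻¹) atTop (nhds 0) :=
      tendsto_inv_atTop_nhds_zero_nat
    simpa using ENNReal.tendsto_ofReal h1
  have hlow : Tendsto (fun n : ℕ => 1 - ENNReal.ofReal ((n:ℝ)⁻¹)) atTop (nhds 1) := by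
    have h2 := ENNReal.Tendsto.sub (tendsto_const_nhds (x := (1:ENNReal)))
      hofreal (Or.inl ENNReal.one_ne_top)
    simpa using h2
  refine tendsto_of_tendsto_of_tendsto_of_le_of_le' hlow tendsto_const_nhds ?_ ?_
  · have hg0 : ∀ᶠ n : ℕ in atTop, 0 ≤ g n := hg.eventually_ge_atTop 0
    have hL1 : ∀ᶠ n : ℕ in atTop, 1 ≤ Real.log n := by
      have h3 := Real.tendsto_log_atTop.comp (tendsto_natCast_atTop_atTop (R := ℝ))
      exact h3.eventually_ge_atTop 1
    have hn2 : ∀ᶠ n : ℕ in atTop, 2 * r + 2 ≤ n := eventually_ge_atTop _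
    have hsm : ∀ᶠ n : ℕ in atTop,
        3 * r * (r * r.factorial * 2 ^ r) / ε * Real.log n ^ (-(1:ℝ) / r)
          ≤ Real.exp (-((r:ℝ) * ((r:ℝ) + 5)) / ε) := by
      have h0 : Tendsto (fun n : ℕ =>
          3 * (r:ℝ) * (r * r.factorial * 2 ^ r) / ε * Real.log n ^ (-(1:ℝ) / r))
          atTop (nhds 0) := by
        have h1 : Tendsto (fun x : ℝ => x ^ (-((1:ℝ)/r))) atTop (nhds 0) :=
          tendsto_rpow_neg_atTop (by positivity)
        have h2 : Tendsto (fun n : ℕ => Real.log n ^ (-(1:ℝ)/r)) atTop (nhds 0) := by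
          have h3 := h1.comp (Real.tendsto_log_atTop.comp
            (tendsto_natCast_atTop_atTop (R := ℝ)))
          simpa [neg_div, Function.comp_def] using h3
        have h4 := h2.const_mul (3 * (r:ℝ) * (r * r.factorial * 2 ^ r) / ε)
        simpa using h4
      exact (h0.eventually_lt_const (by positivity)).mono (fun n h => h.le)
    filter_upwards [hg0, hL1, hn2, hsm] with n hg0' hL1' hn2' hsm'
    haveI := xiMeasure_prob n r
    set G : Set (RSubsets n r → ℝ) := {ξ : RSubsets n r → ℝ |
      let σ : ℝ := (Real.log n - g n) / (Nat.choose (n - 1) (r - 1) : ℝ)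
      ∀ X : Finset (Fin n), X.Nonempty → Disjoint X (lowDeg ξ σ ε) →
        (X.card : ℝ) ≤ n * Real.log n ^ (-(1 : ℝ) / r) →
        ∀ Y : Finset (Fin n), Disjoint X Y → Y.card ≤ r * X.card →
          ∃ S : RSubsets n r, ξ S ≤ σ ∧ (S.1 ∩ X).Nonempty ∧ Disjoint S.1 Y} with hGdef
    have hGc : Gᶜ = {ξ : RSubsets n r → ℝ |
        ¬ ∀ X : Finset (Fin n), X.Nonempty →
            Disjoint X (lowDeg ξ ((Real.log n - g n) / (Nat.choose (n-1) (r-1) : ℝ)) ε) →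
            (X.card : ℝ) ≤ n * Real.log n ^ (-(1:ℝ) / r) →
            ∀ Y : Finset (Fin n), Disjoint X Y → Y.card ≤ r * X.card →
              ∃ S : RSubsets n r, ξ S ≤ (Real.log n - g n) / (Nat.choose (n-1) (r-1) : ℝ) ∧
                (S.1 ∩ X).Nonempty ∧ Disjoint S.1 Y} := Set.ext (fun ξ => Iff.rfl)
    have hb : xiMeasure n r Gᶜ ≤ ENNReal.ofReal ((n:ℝ)⁻¹) := by
      rw [hGc]
      exact main_bound r n hr ε (g n) hε hg0' hn2' hL1' hsm'
    have h1 : (1:ENNReal) ≤ xiMeasure n r G + xiMeasure n r Gᶜ := by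
      have h2 : (1:ENNReal) = xiMeasure n r Set.univ := (measure_univ).symm
      rw [h2, ← Set.union_compl_self G]
      exact measure_union_le _ _
    exact tsub_le_iff_right.mpr (le_trans h1 (add_le_add_right hb _))
  · exact Filter.Eventually.of_forall (fun n => by
      haveI := xiMeasure_prob n r
      exact prob_le_one)
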